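/- For every integer K ≥ 5, Φ⁻¹(1 - 1/K) ≥ √(log(K²/(4π log K))). -/

import Mathlib

open Real Set

/-- The standard normal cumulative distribution function. -/
noncomputable def Phi (x : ℝ) : ℝ :=
  (Real.sqrt (2 * π))⁻¹ * ∫ u in Set.Iic x, Real.exp (-u ^ 2 / 2)

/-- The inverse of the standard normal cdf. -/
noncomputable def PhiInv : ℝ → ℝ := Function.invFun Phi

open MeasureTheory Filter Topology

lemma gauss_rw : (fun u : ℝ => Real.exp (-u ^ 2 / 2)) = fun u => Real.exp (-((1:ℝ)/2) * u ^ 2) := by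
  funext u; ring_nf

lemma gauss_integrable : Integrable (fun u : ℝ => Real.exp (-u ^ 2 / 2)) := by
  rw [gauss_rw]; exact integrable_exp_neg_mul_sq (by norm_num)

lemma gauss_integral : ∫ u : ℝ, Real.exp (-u ^ 2 / 2) = Real.sqrt (2 * π) := by
  rw [gauss_rw, integral_gaussian]; norm_num [mul_comm]

lemma sqrt2pi_pos : 0 < Real.sqrt (2 * π) := Real.sqrt_pos.2 (by positivity)



lemma Phi_eq (x : ℝ) :
    Phi x = 1 - (Real.sqrt (2 * π))⁻¹ * ∫ u in Set.Ioi x, Real.exp (-u ^ 2 / 2) := by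
  have h := MeasureTheory.integral_add_compl (measurableSet_Iic (a := x)) gauss_integrable
  rw [compl_Iic] at h
  rw [Phi, eq_sub_iff_add_eq, ← mul_add, h, gauss_integral,
    inv_mul_cancel₀ sqrt2pi_pos.ne']

lemma Phi_sub_Phi {x y : ℝ} :
    Phi y - Phi x = (Real.sqrt (2 * π))⁻¹ * ∫ u in x..y, Real.exp (-u ^ 2 / 2) := by
  rw [Phi, Phi, ← mul_sub, intervalIntegral.integral_Iic_sub_Iic
    gauss_integrable.integrableOn gauss_integrable.integrableOn]

lemma Phi_strictMono : StrictMono Phi := by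
  intro x y hxy
  have h : 0 < ∫ u in x..y, Real.exp (-u ^ 2 / 2) :=
    intervalIntegral.intervalIntegral_pos_of_pos
      gauss_integrable.intervalIntegrable (fun u => Real.exp_pos _) hxy
  nlinarith [Phi_sub_Phi (x := x) (y := y), inv_pos.2 sqrt2pi_pos, mul_pos (inv_pos.2 sqrt2pi_pos) h]

lemma Phi_continuous : Continuous Phi := by
  have h : Continuous fun x => ∫ u in (0:ℝ)..x, Real.exp (-u ^ 2 / 2) :=
    intervalIntegral.continuous_primitive (fun a b => gauss_integrable.intervalIntegrable) 0
  have : ∀ x, Phi x = Phi 0 + (Real.sqrt (2 * π))⁻¹ * ∫ u in (0:ℝ)..x, Real.exp (-u ^ 2 / 2) := by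
    intro x
    have := Phi_sub_Phi (x := (0:ℝ)) (y := x)
    linarith
  rw [funext this]
  exact continuous_const.add (continuous_const.mul h)

lemma tendsto_tail_atBot :
    Tendsto (fun x : ℝ => ∫ u in Set.Ioi x, Real.exp (-u ^ 2 / 2)) atBot
      (𝓝 (Real.sqrt (2 * π))) := by
  have h : AECover (volume : Measure ℝ) atBot (fun x : ℝ => Set.Ioi x) :=
    aecover_Ioi tendsto_id
  simpa [gauss_integral] using h.integral_tendsto_of_countably_generated gauss_integrable

lemma tendsto_Phi_atBot : Tendsto Phi atBot (𝓝 0) := by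
  have := tendsto_tail_atBot.const_mul (Real.sqrt (2 * π))⁻¹
  rw [inv_mul_cancel₀ sqrt2pi_pos.ne'] at this
  have h2 := (tendsto_const_nhds (x := (1:ℝ)) (f := atBot)).sub this
  simp only [sub_self] at h2
  exact h2.congr fun x => (Phi_eq x).symm

lemma tendsto_Phi_atTop : Tendsto Phi atTop (𝓝 1) := by
  have h : AECover (volume : Measure ℝ) atTop (fun x : ℝ => Set.Iic x) :=
    aecover_Iic tendsto_id
  have h2 := (h.integral_tendsto_of_countably_generated gauss_integrable).const_mul
    (Real.sqrt (2 * π))⁻¹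
  rw [gauss_integral, inv_mul_cancel₀ sqrt2pi_pos.ne'] at h2
  exact h2

lemma Phi_surj {y : ℝ} (h0 : 0 < y) (h1 : y < 1) : ∃ c, Phi c = y := by
  obtain ⟨b, hb⟩ := (tendsto_Phi_atTop.eventually_const_lt h1).exists
  obtain ⟨a, ha⟩ := (tendsto_Phi_atBot.eventually_lt_const h0).exists
  have hab : a ≤ b := by
    by_contra h
    push_neg at h
    exact absurd (Phi_strictMono h) (by linarith)
  obtain ⟨c, _, hc⟩ := intermediate_value_Icc hab Phi_continuous.continuousOn
    (Set.mem_Icc.2 ⟨ha.le, hb.le⟩)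
  exact ⟨c, hc⟩

lemma le_PhiInv {x y : ℝ} (h0 : 0 < y) (h1 : y < 1) (hx : Phi x ≤ y) : x ≤ PhiInv y := by
  obtain ⟨c, hc⟩ := Phi_surj h0 h1
  have hPy : Phi (PhiInv y) = y := Function.invFun_eq ⟨c, hc⟩
  by_contra h
  push_neg at h
  exact absurd (hPy ▸ Phi_strictMono h) (not_lt.2 hx)

lemma exp_neg_poly_le {t : ℝ} (ht : 0 ≤ t) :
    1 - t + t ^ 2 / 2 - t ^ 3 / 6 + t ^ 4 / 24 - t ^ 5 / 120 ≤ Real.exp (-t) := by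
  set g : ℝ → ℝ := fun s =>
    Real.exp s * (1 - s + s ^ 2 / 2 - s ^ 3 / 6 + s ^ 4 / 24 - s ^ 5 / 120) with hgdef
  have hg : ∀ s : ℝ, HasDerivAt g (Real.exp s * (-s ^ 5 / 120)) s := by
    intro s
    have h1 : HasDerivAt (fun s : ℝ =>
        1 - s + s ^ 2 / 2 - s ^ 3 / 6 + s ^ 4 / 24 - s ^ 5 / 120)
        (0 - 1 + (2 : ℕ) * s ^ 1 / 2 - (3 : ℕ) * s ^ 2 / 6 + (4 : ℕ) * s ^ 3 / 24
          - (5 : ℕ) * s ^ 4 / 120) s := by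
      exact (((((hasDerivAt_const s (1:ℝ)).sub (hasDerivAt_id s)).add
        ((hasDerivAt_pow 2 s).div_const 2)).sub ((hasDerivAt_pow 3 s).div_const 6)).add
        ((hasDerivAt_pow 4 s).div_const 24)).sub ((hasDerivAt_pow 5 s).div_const 120)
    have h2 := (Real.hasDerivAt_exp s).mul h1
    refine h2.congr_deriv (Eq.symm ?_)
    push_cast
    ring
  have mono : AntitoneOn g (Set.Ici 0) := by
    apply antitoneOn_of_deriv_nonpos (convex_Ici 0)
      (Continuous.continuousOn (by fun_prop))
    · intro s _
      exact (hg s).differentiableAt.differentiableWithinAt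
    · intro s hs
      rw [interior_Ici] at hs
      rw [(hg s).deriv]
      have : (0:ℝ) ≤ s ^ 5 := pow_nonneg (le_of_lt hs) 5
      nlinarith [Real.exp_pos s]
  have h3 : g t ≤ g 0 := mono (Set.self_mem_Ici) ht ht
  have h4 : g 0 = 1 := by simp [hgdef]
  rw [Real.exp_neg]
  have h5 : Real.exp t * (1 - t + t ^ 2 / 2 - t ^ 3 / 6 + t ^ 4 / 24 - t ^ 5 / 120) ≤ 1 := by
    rw [h4] at h3; exact h3
  have hexp := Real.exp_pos t
  calc 1 - t + t ^ 2 / 2 - t ^ 3 / 6 + t ^ 4 / 24 - t ^ 5 / 120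
      = (Real.exp t)⁻¹ * (Real.exp t * (1 - t + t ^ 2 / 2 - t ^ 3 / 6 + t ^ 4 / 24 - t ^ 5 / 120)) := by
        field_simp
    _ ≤ (Real.exp t)⁻¹ * 1 := by gcongr
    _ = (Real.exp t)⁻¹ := mul_one _

lemma exp_lower {x : ℝ} (hx : 0 ≤ x) :
    1 + x + x ^ 2 / 2 + x ^ 3 / 6 + x ^ 4 / 24 + x ^ 5 / 120 ≤ Real.exp x := by
  have h := Real.sum_le_exp_of_nonneg hx 6
  simp [Finset.sum_range_succ] at h
  convert h using 1
  norm_num [Nat.factorial]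

lemma tail_lb {x : ℝ} (hx : 0 ≤ x) :
    x / (1 + x ^ 2) * Real.exp (-x ^ 2 / 2) ≤ ∫ u in Set.Ioi x, Real.exp (-u ^ 2 / 2) := by
  set g : ℝ → ℝ := fun u => u / (1 + u ^ 2) * Real.exp (-u ^ 2 / 2) with hgdef
  set D : ℝ → ℝ := fun u =>
    Real.exp (-u ^ 2 / 2) * ((1 - 2 * u ^ 2 - u ^ 4) / (1 + u ^ 2) ^ 2) with hDdef
  have hne : ∀ u : ℝ, (1 + u ^ 2) ≠ 0 := fun u => by positivity
  have hg : ∀ u : ℝ, HasDerivAt g (D u) u := by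
    intro u
    have hE : HasDerivAt (fun u : ℝ => Real.exp (-u ^ 2 / 2))
        (Real.exp (-u ^ 2 / 2) * (-((2:ℕ) * u ^ 1) / 2)) u :=
      HasDerivAt.exp (((hasDerivAt_pow 2 u).neg).div_const 2)
    have hq : HasDerivAt (fun u : ℝ => u / (1 + u ^ 2))
        ((1 * (1 + u ^ 2) - u * (0 + (2:ℕ) * u ^ 1)) / (1 + u ^ 2) ^ 2) u :=
      (hasDerivAt_id u).div ((hasDerivAt_const u (1:ℝ)).add (hasDerivAt_pow 2 u)) (hne u)
    have := hq.mul hE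
    refine this.congr_deriv (Eq.symm ?_)
    rw [hDdef]
    push_cast
    field_simp
    ring
  have hDcont : Continuous D := by
    apply Continuous.mul (by fun_prop)
    exact Continuous.div (by fun_prop) (by fun_prop) (fun u => pow_ne_zero 2 (hne u))
  have key : ∀ b, x ≤ b → g x - g b ≤ ∫ u in Set.Ioi x, Real.exp (-u ^ 2 / 2) := by
    intro b hb
    have hIb : ∫ u in x..b, D u = g b - g x :=
      intervalIntegral.integral_eq_sub_of_hasDerivAt (fun t _ => hg t)
        (hDcont.intervalIntegrable x b)
    have hptwise : ∀ u ∈ Set.Icc x b, -D u ≤ Real.exp (-u ^ 2 / 2) := by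
      intro u _
      have h1 : (2 * u ^ 2 + u ^ 4 - 1) / (1 + u ^ 2) ^ 2 ≤ 1 := by
        rw [div_le_one (by positivity)]
        nlinarith [sq_nonneg u, sq_nonneg (u ^ 2)]
      have h2 : -D u = Real.exp (-u ^ 2 / 2) * ((2 * u ^ 2 + u ^ 4 - 1) / (1 + u ^ 2) ^ 2) := by
        rw [hDdef]; ring
      rw [h2]
      calc Real.exp (-u ^ 2 / 2) * ((2 * u ^ 2 + u ^ 4 - 1) / (1 + u ^ 2) ^ 2)
          ≤ Real.exp (-u ^ 2 / 2) * 1 := by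
            gcongr
        _ = Real.exp (-u ^ 2 / 2) := mul_one _
    have hmono : ∫ u in x..b, -D u ≤ ∫ u in x..b, Real.exp (-u ^ 2 / 2) :=
      intervalIntegral.integral_mono_on hb (hDcont.neg.intervalIntegrable x b)
        (gauss_integrable.intervalIntegrable) hptwise
    have hIb' : ∫ u in x..b, -D u = g x - g b := by
      rw [intervalIntegral.integral_neg, hIb]; ring
    have hsub : ∫ u in x..b, Real.exp (-u ^ 2 / 2) ≤ ∫ u in Set.Ioi x, Real.exp (-u ^ 2 / 2) := by
      rw [intervalIntegral.integral_of_le hb]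
      apply MeasureTheory.setIntegral_mono_set gauss_integrable.integrableOn
        (Filter.Eventually.of_forall fun u => (Real.exp_pos _).le)
        (Filter.Eventually.of_forall (Set.Ioc_subset_Ioi_self))
    linarith [hIb' ▸ hmono]
  have hg0 : Filter.Tendsto g Filter.atTop (𝓝 0) := by
    apply squeeze_zero' (Filter.eventually_atTop.2 ⟨0, fun b hb => by positivity⟩)
      (Filter.eventually_atTop.2 ⟨1, fun b (hb : (1:ℝ) ≤ b) => ?_⟩) tendsto_inv_atTop_zero
    have h1 : Real.exp (-b ^ 2 / 2) ≤ 1 := Real.exp_le_one_iff.2 (by nlinarith)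
    have h2 : b / (1 + b ^ 2) ≤ b⁻¹ := by
      rw [div_le_iff₀ (by positivity), inv_mul_eq_div, le_div_iff₀ (by linarith)]
      nlinarith
    calc g b = b / (1 + b ^ 2) * Real.exp (-b ^ 2 / 2) := rfl
      _ ≤ b⁻¹ * 1 := by
          apply mul_le_mul h2 h1 (Real.exp_pos _).le (by positivity)
      _ = b⁻¹ := mul_one _
  have hlim : Filter.Tendsto (fun b => g x - g b) Filter.atTop (𝓝 (g x)) := by
    simpa using tendsto_const_nhds.sub hg0
  exact le_of_tendsto hlim (Filter.eventually_atTop.2 ⟨x, key⟩)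

lemma poly_integral (b c : ℝ) :
    ∫ u in b..c, (1 - u ^ 2 / 2 + u ^ 4 / 8 - u ^ 6 / 48) =
      (c - c ^ 3 / 6 + c ^ 5 / 40 - c ^ 7 / 336) - (b - b ^ 3 / 6 + b ^ 5 / 40 - b ^ 7 / 336) := by
  have hd : ∀ u : ℝ, HasDerivAt (fun u : ℝ => u - u ^ 3 / 6 + u ^ 5 / 40 - u ^ 7 / 336)
      (1 - u ^ 2 / 2 + u ^ 4 / 8 - u ^ 6 / 48) u := by
    intro u
    have h : HasDerivAt (fun u : ℝ => u - u ^ 3 / 6 + u ^ 5 / 40 - u ^ 7 / 336)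
        (1 - (3:ℕ) * u ^ 2 / 6 + (5:ℕ) * u ^ 4 / 40 - (7:ℕ) * u ^ 6 / 336) u :=
      (((hasDerivAt_id u).sub ((hasDerivAt_pow 3 u).div_const 6)).add
        ((hasDerivAt_pow 5 u).div_const 40)).sub ((hasDerivAt_pow 7 u).div_const 336)
    convert h using 1
    push_cast
    ring
  exact intervalIntegral.integral_eq_sub_of_hasDerivAt (fun t _ => hd t)
    ((by fun_prop : Continuous fun u : ℝ => 1 - u ^ 2 / 2 + u ^ 4 / 8 - u ^ 6 / 48).intervalIntegrable b c)

lemma poly_le_gauss {u : ℝ} (h0 : 0 ≤ u) (h1 : u ≤ 1.7) :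
    1 - u ^ 2 / 2 + u ^ 4 / 8 - u ^ 6 / 48 ≤ Real.exp (-u ^ 2 / 2) := by
  have ht : (0:ℝ) ≤ u ^ 2 / 2 := by positivity
  have h := exp_neg_poly_le ht
  have ht5 : u ^ 2 / 2 ≤ 5 := by nlinarith
  have : -(u ^ 2 / 2) = -u ^ 2 / 2 := by ring
  rw [this] at h
  nlinarith [pow_nonneg ht 4, pow_nonneg ht 5]

lemma sqrt_two_pi_le : Real.sqrt (2 * π) ≤ 2.5067 := by
  rw [show (2.5067 : ℝ) = Real.sqrt (2.5067 ^ 2) from (Real.sqrt_sq (by norm_num)).symm]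
  apply Real.sqrt_le_sqrt
  nlinarith [Real.pi_lt_d6]

lemma tail_ge_of_le {x b c : ℝ} (hx : 0 ≤ x) (hxb : x ≤ b) (hbc : b ≤ c) (hc : c ≤ 1.7) :
    ∫ u in b..c, (1 - u ^ 2 / 2 + u ^ 4 / 8 - u ^ 6 / 48) ≤
      ∫ u in Set.Ioi x, Real.exp (-u ^ 2 / 2) := by
  have h1 : ∫ u in b..c, (1 - u ^ 2 / 2 + u ^ 4 / 8 - u ^ 6 / 48) ≤
      ∫ u in b..c, Real.exp (-u ^ 2 / 2) := by
    apply intervalIntegral.integral_mono_on hbc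
      ((by fun_prop : Continuous fun u : ℝ => 1 - u ^ 2 / 2 + u ^ 4 / 8 - u ^ 6 / 48).intervalIntegrable b c)
      gauss_integrable.intervalIntegrable
    intro u hu
    exact poly_le_gauss (le_trans (le_trans hx hxb) hu.1) (le_trans hu.2 hc)
  have h2 : ∫ u in b..c, Real.exp (-u ^ 2 / 2) ≤ ∫ u in Set.Ioi x, Real.exp (-u ^ 2 / 2) := by
    rw [intervalIntegral.integral_of_le hbc]
    apply MeasureTheory.setIntegral_mono_set gauss_integrable.integrableOn
      (Filter.Eventually.of_forall fun u => (Real.exp_pos _).le)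
      (Filter.Eventually.of_forall fun u hu => lt_of_le_of_lt hxb hu.1)
  linarith

lemma Phi_le_of_tail {x : ℝ} {K : ℕ} (hK : 0 < K)
    (h : Real.sqrt (2 * π) / K ≤ ∫ u in Set.Ioi x, Real.exp (-u ^ 2 / 2)) :
    Phi x ≤ 1 - 1 / K := by
  rw [Phi_eq]
  have hc := inv_pos.2 sqrt2pi_pos
  have h2 := mul_le_mul_of_nonneg_left h hc.le
  have h3 : (Real.sqrt (2 * π))⁻¹ * (Real.sqrt (2 * π) / K) = 1 / K := by
    field_simp
  linarith

lemma log_ge_of_pow {K p q : ℕ} (hK : 1 ≤ K) (h : 2 ^ p ≤ K ^ q) :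
    (p : ℝ) * Real.log 2 ≤ (q : ℝ) * Real.log K := by
  have h2 := Real.log_le_log (by positivity) (show ((2:ℕ):ℝ) ^ p ≤ ((K:ℕ):ℝ) ^ q by
    exact_mod_cast pow_le_pow_left₀ (by norm_num) (le_refl _) p |>.trans_eq rfl |>.trans
      (by exact_mod_cast h))
  rwa [Real.log_pow, Real.log_pow] at h2

lemma small_case {K : ℕ} {b r : ℝ} (hK : 0 < K) (hb0 : 0 ≤ b) (hb17 : b ≤ 1.7)
    (hr0 : 0 < r) (hlog : r ≤ Real.log K)
    (harg : (K : ℝ) ^ 2 / (4 * π * r) ≤ Real.exp (b ^ 2))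
    (hnum : Real.sqrt (2 * π) / K ≤
      ((1.7 : ℝ) - 1.7 ^ 3 / 6 + 1.7 ^ 5 / 40 - 1.7 ^ 7 / 336) -
        (b - b ^ 3 / 6 + b ^ 5 / 40 - b ^ 7 / 336)) :
    Phi (Real.sqrt (Real.log ((K : ℝ) ^ 2 / (4 * π * Real.log K)))) ≤ 1 - 1 / K := by
  have hpi : 0 < π := Real.pi_pos
  have hK1 : (1:ℝ) ≤ (K:ℝ) := by exact_mod_cast hK
  have hlogpos : 0 < Real.log K := lt_of_lt_of_le hr0 hlog
  have hargpos : 0 < (K : ℝ) ^ 2 / (4 * π * Real.log K) := by positivity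
  have harg2 : (K : ℝ) ^ 2 / (4 * π * Real.log K) ≤ Real.exp (b ^ 2) := by
    refine le_trans ?_ harg
    gcongr
  have hlogarg : Real.log ((K : ℝ) ^ 2 / (4 * π * Real.log K)) ≤ b ^ 2 := by
    exact (Real.log_le_iff_le_exp hargpos).2 harg2
  set x := Real.sqrt (Real.log ((K : ℝ) ^ 2 / (4 * π * Real.log K))) with hx
  have hxb : x ≤ b := by
    calc x ≤ Real.sqrt (b ^ 2) := Real.sqrt_le_sqrt hlogarg
      _ = b := Real.sqrt_sq hb0
  apply Phi_le_of_tail hK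
  calc Real.sqrt (2 * π) / K
      ≤ ∫ u in b..(1.7:ℝ), (1 - u ^ 2 / 2 + u ^ 4 / 8 - u ^ 6 / 48) := by
        rw [poly_integral]; exact hnum
    _ ≤ ∫ u in Set.Ioi x, Real.exp (-u ^ 2 / 2) :=
        tail_ge_of_le (Real.sqrt_nonneg _) hxb hb17 le_rfl

set_option maxHeartbeats 1000000 in
lemma large_case {K : ℕ} (hK : 8 ≤ K) :
    Phi (Real.sqrt (Real.log ((K : ℝ) ^ 2 / (4 * π * Real.log K)))) ≤ 1 - 1 / K := by
  have hpi_lb := Real.pi_gt_d6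
  have hpi_ub := Real.pi_lt_d6
  have hKpos : (0:ℝ) < K := by positivity
  have hlogK : (2.0794415409:ℝ) ≤ Real.log K := by
    have h := log_ge_of_pow (K := K) (p := 3) (q := 1) (le_trans (by norm_num) hK)
      (by simpa using hK)
    have h2 := Real.log_two_gt_d9
    push_cast at h
    nlinarith
  set t : ℝ := 2 * Real.log K with htdef
  have ht : (4.1588830818:ℝ) ≤ t := by rw [htdef]; linarith
  have htpos : (0:ℝ) < t := by linarith
  have hlogKpos : (0:ℝ) < Real.log K := by linarith
  set s : ℝ := Real.log (4 * π * Real.log K) with hsdef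
  have h4pi : 4 * π * Real.log K = 2 * π * t := by rw [htdef]; ring
  have h2pit_pos : (0:ℝ) < 4 * π * Real.log K := by positivity
  clear_value t s
  have he3_ub : Real.exp 3 ≤ 20.0855369264 := by
    have h := Real.exp_one_lt_d9
    calc Real.exp 3 = Real.exp 1 ^ (3:ℕ) := by
          rw [← Real.exp_nat_mul]; norm_num
      _ ≤ 2.7182818286 ^ (3:ℕ) := by gcongr <;> norm_num [Real.exp_one_lt_d9.le]
      _ ≤ 20.0855369264 := by norm_num
  have he3_lb : (20.0855369196:ℝ) ≤ Real.exp 3 := by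
    have h := Real.exp_one_gt_d9
    calc (20.0855369196:ℝ) ≤ 2.7182818283 ^ (3:ℕ) := by norm_num
      _ ≤ Real.exp 1 ^ (3:ℕ) := by gcongr <;> norm_num [Real.exp_one_gt_d9.le]
      _ = Real.exp 3 := by rw [← Real.exp_nat_mul]; norm_num
  have hec_ub : Real.exp 0.2575 ≤ 1.2939834 := by
    have h := exp_neg_poly_le (t := 0.2575) (by norm_num)
    have h2 : (0.7728:ℝ) ≤ Real.exp (-0.2575) := by nlinarith
    have h3 : Real.exp 0.2575 = (Real.exp (-0.2575))⁻¹ := by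
      rw [← Real.exp_neg]; norm_num
    rw [h3]
    rw [inv_le_comm₀ (by positivity) (by norm_num)]
    linarith
  have hec_lb : (1.2936:ℝ) ≤ Real.exp 0.2575 := by
    have h := exp_lower (x := 0.2575) (by norm_num)
    nlinarith
  have hsplit : Real.exp (3.2575:ℝ) = Real.exp 3 * Real.exp 0.2575 := by
    rw [← Real.exp_add]; norm_num
  have hexp_ub : Real.exp (3.2575:ℝ) ≤ 25.9906 := by
    rw [hsplit]
    nlinarith [Real.exp_pos 3, Real.exp_pos (0.2575:ℝ)]
  have hexp_lb : (25.98:ℝ) ≤ Real.exp (3.2575:ℝ) := by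
    rw [hsplit]
    nlinarith [Real.exp_pos 3, Real.exp_pos (0.2575:ℝ)]
  have hs_lb : (3.2575:ℝ) ≤ s := by
    rw [hsdef, Real.le_log_iff_exp_le h2pit_pos]
    rw [h4pi]
    nlinarith
  have hst : s ≤ t := by
    rw [hsdef, Real.log_le_iff_le_exp h2pit_pos, h4pi]
    have h := exp_lower (x := t) (le_of_lt htpos)
    nlinarith [pow_nonneg htpos.le 2, pow_nonneg htpos.le 3, pow_nonneg htpos.le 4,
      pow_nonneg htpos.le 5]
  have hkey : 2 * π * (s - 1) ^ 2 ≤ Real.exp s * (s - 2) := by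
    set u : ℝ := s - 3.2575 with hudef
    clear_value u
    have hu0 : (0:ℝ) ≤ u := by rw [hudef]; linarith
    have heu : 1 + u + u ^ 2 / 2 ≤ Real.exp u := by
      have h := exp_lower (x := u) hu0
      linarith [pow_nonneg hu0 3, pow_nonneg hu0 4, pow_nonneg hu0 5]
    have hes : 25.98 * (1 + u + u ^ 2 / 2) ≤ Real.exp s := by
      have h : Real.exp s = Real.exp (3.2575:ℝ) * Real.exp u := by
        rw [← Real.exp_add]; rw [hudef]; norm_num
      rw [h]
      nlinarith [Real.exp_pos u, sq_nonneg u]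
    have hs2 : s - 2 = u + 1.2575 := by rw [hudef]; ring
    have hs1 : s - 1 = u + 2.2575 := by rw [hudef]; ring
    rw [hs2, hs1]
    have hpoly : 6.2832 * (u + 2.2575) ^ 2 ≤ 25.98 * (1 + u + u ^ 2 / 2) * (u + 1.2575) := by
      nlinarith [pow_nonneg hu0 3, sq_nonneg u, hu0]
    nlinarith [sq_nonneg (u + 2.2575), mul_nonneg (mul_nonneg (by norm_num : (0:ℝ) ≤ 25.98)
      (by nlinarith [sq_nonneg u] : (0:ℝ) ≤ 1 + u + u ^ 2 / 2)) (by linarith : (0:ℝ) ≤ u + 1.2575)]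
  have hexps : Real.exp s = 2 * π * t := by
    rw [hsdef, Real.exp_log h2pit_pos, h4pi]
  have htkey : (s - 1) ^ 2 ≤ t * (s - 2) := by
    rw [hexps] at hkey
    have hpipos := Real.pi_pos
    nlinarith
  have hL : Real.log ((K : ℝ) ^ 2 / (4 * π * Real.log K)) = t - s := by
    rw [Real.log_div (by positivity) (ne_of_gt h2pit_pos), Real.log_pow, ← hsdef, htdef]
    push_cast
    ring
  have hts : (0:ℝ) ≤ t - s := by linarith
  set x := Real.sqrt (Real.log ((K : ℝ) ^ 2 / (4 * π * Real.log K))) with hxdef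
  have hx0 : 0 ≤ x := Real.sqrt_nonneg _
  have hx2 : x ^ 2 = t - s := by rw [hxdef, hL]; exact Real.sq_sqrt hts
  have hsqineq : (x ^ 2 + 1) ^ 2 ≤ t * x ^ 2 := by
    rw [hx2]; nlinarith [htkey]
  have hxt : x ^ 2 + 1 ≤ Real.sqrt t * x := by
    have h1 : x ^ 2 + 1 = Real.sqrt ((x ^ 2 + 1) ^ 2) := (Real.sqrt_sq (by positivity)).symm
    rw [h1]
    calc Real.sqrt ((x ^ 2 + 1) ^ 2) ≤ Real.sqrt (t * x ^ 2) := Real.sqrt_le_sqrt hsqineq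
      _ = Real.sqrt t * x := by rw [Real.sqrt_mul htpos.le, Real.sqrt_sq hx0]
  have hexpt : Real.exp t = (K : ℝ) ^ 2 := by
    rw [htdef, two_mul, Real.exp_add, Real.exp_log hKpos]; ring
  have hE : Real.exp (-x ^ 2 / 2) = Real.sqrt (2 * π) * Real.sqrt t / K := by
    have h1 : -x ^ 2 / 2 = s / 2 - t / 2 := by rw [hx2]; ring
    rw [h1, Real.exp_sub, Real.exp_half, Real.exp_half, hexps, hexpt,
      Real.sqrt_sq hKpos.le, Real.sqrt_mul (by positivity)]
  apply Phi_le_of_tail (show 0 < K by omega)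
  have htail := tail_lb hx0
  rw [hE] at htail
  refine le_trans ?_ htail
  have hxx : 1 ≤ x * Real.sqrt t / (1 + x ^ 2) := by
    rw [le_div_iff₀ (by positivity)]
    nlinarith [hxt]
  have heq : x / (1 + x ^ 2) * (Real.sqrt (2 * π) * Real.sqrt t / K) =
      x * Real.sqrt t / (1 + x ^ 2) * (Real.sqrt (2 * π) / K) := by ring
  rw [heq]
  exact le_mul_of_one_le_left (by positivity) hxx


lemma sqrt2pi_div_le {K : ℕ} (hK : 0 < K) : Real.sqrt (2 * π) / K ≤ 2.5067 / K := by
  gcongr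
  exact sqrt_two_pi_le

theorem phiInv_lower_bound (K : ℕ) (hK : 5 ≤ K) :
    PhiInv (1 - 1 / (K : ℝ)) ≥
      Real.sqrt (Real.log ((K : ℝ) ^ 2 / (4 * π * Real.log K))) := by
  have h5 : (5:ℝ) ≤ K := by exact_mod_cast hK
  have hK0 : (0:ℝ) < K := by linarith
  have h0 : 0 < 1 - 1 / (K:ℝ) := by
    have h : 1 / (K:ℝ) ≤ 1 / 5 := by
      apply one_div_le_one_div_of_le <;> linarith
    linarith
  have h1 : 1 - 1 / (K:ℝ) < 1 := by
    have : 0 < 1 / (K:ℝ) := by positivity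
    linarith
  apply le_PhiInv h0 h1
  rcases le_or_gt 8 K with h8 | h8
  · exact large_case h8
  · have hpi := Real.pi_gt_d6
    have hl2 := Real.log_two_gt_d9
    interval_cases K
    · -- K = 5
      apply small_case (b := 0.48) (r := 1.594238) (by norm_num) (by norm_num)
        (by norm_num) (by norm_num)
      · have h := log_ge_of_pow (K := 5) (p := 23) (q := 10) (by norm_num) (by norm_num)
        push_cast at h ⊢
        nlinarith
      · have hexp := exp_lower (show (0:ℝ) ≤ (0.48:ℝ) ^ 2 by norm_num)
        rw [div_le_iff₀ (by nlinarith)]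
        push_cast
        nlinarith [Real.exp_pos ((0.48:ℝ) ^ 2)]
      · refine le_trans (sqrt2pi_div_le (by norm_num)) ?_
        push_cast
        norm_num
    · -- K = 6
      apply small_case (b := 0.72) (r := 1.732867) (by norm_num) (by norm_num)
        (by norm_num) (by norm_num)
      · have h := log_ge_of_pow (K := 6) (p := 5) (q := 2) (by norm_num) (by norm_num)
        push_cast at h ⊢
        nlinarith
      · have hexp := exp_lower (show (0:ℝ) ≤ (0.72:ℝ) ^ 2 by norm_num)
        rw [div_le_iff₀ (by nlinarith)]
        push_cast
        nlinarith [Real.exp_pos ((0.72:ℝ) ^ 2)]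
      · refine le_trans (sqrt2pi_div_le (by norm_num)) ?_
        push_cast
        norm_num
    · -- K = 7
      apply small_case (b := 0.84) (r := 1.945283) (by norm_num) (by norm_num)
        (by norm_num) (by norm_num)
      · have h := log_ge_of_pow (K := 7) (p := 87) (q := 31) (by norm_num) (by norm_num)
        push_cast at h ⊢
        nlinarith
      · have hexp := exp_lower (show (0:ℝ) ≤ (0.84:ℝ) ^ 2 by norm_num)
        rw [div_le_iff₀ (by nlinarith)]
        push_cast
        nlinarith [Real.exp_pos ((0.84:ℝ) ^ 2)]
      · refine le_trans (sqrt2pi_div_le (by norm_num)) ?_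
        push_cast
        norm_num
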